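/- Let G be a finite simple graph with at least one edge, and let (e_1,…,e_m) be an arbitrary enumeration of all edges of G. For each i, let G_L[i] be the spanning subgraph of G with edge set {e_i,…,e_m}, and let N_i be the set of common neighbors in G_L[i] of the two endpoints of e_i. Then the clique number satisfies ω(G) = max_{1 ≤ i ≤ m} ( 2 + ω(G[N_i]) ), where G[N_i] denotes the subgraph of G induced by N_i. -/

import Mathlib

/-- The clique number `ω(G)` of a graph `G`: the largest size of a set of pairwise
adjacent vertices (0 for a graph with no vertices). -/
noncomputable def cliqueNum' {V : Type*} (G : SimpleGraph V) : ℕ :=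
  sSup {n | ∃ s : Finset V, G.IsNClique n s}

/-- The clique number `ω(G[N])` of the subgraph of `G` induced by the vertex set `N`. -/
noncomputable def cliqueNumOn {V : Type*} (G : SimpleGraph V) (N : Set V) : ℕ :=
  sSup {n | ∃ s : Finset V, ↑s ⊆ N ∧ G.IsNClique n s}

lemma clique_le_cliqueNum' {V : Type*} [Fintype V] {G : SimpleGraph V}
    {n : ℕ} {s : Finset V} (h : G.IsNClique n s) : n ≤ cliqueNum' G :=
  le_csSup ⟨Fintype.card V, fun _ ⟨t, ht⟩ => ht.card_eq ▸ t.card_le_univ⟩ ⟨s, h⟩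

lemma cliqueNum'_attained {V : Type*} [Fintype V] (G : SimpleGraph V) :
    ∃ s : Finset V, G.IsNClique (cliqueNum' G) s := by
  have h : cliqueNum' G ∈ {n | ∃ s : Finset V, G.IsNClique n s} :=
    Nat.sSup_mem ⟨0, ∅, ⟨by simp [SimpleGraph.IsClique], by simp⟩⟩
      ⟨Fintype.card V, fun _ ⟨t, ht⟩ => ht.card_eq ▸ t.card_le_univ⟩
  exact h

lemma clique_le_cliqueNumOn {V : Type*} [Fintype V] {G : SimpleGraph V} {N : Set V}
    {n : ℕ} {s : Finset V} (hsub : ↑s ⊆ N) (h : G.IsNClique n s) : n ≤ cliqueNumOn G N :=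
  le_csSup ⟨Fintype.card V, fun _ ⟨t, _, ht⟩ => ht.card_eq ▸ t.card_le_univ⟩ ⟨s, hsub, h⟩

lemma cliqueNumOn_attained {V : Type*} [Fintype V] (G : SimpleGraph V) (N : Set V) :
    ∃ s : Finset V, ↑s ⊆ N ∧ G.IsNClique (cliqueNumOn G N) s := by
  have h : cliqueNumOn G N ∈ {n | ∃ s : Finset V, ↑s ⊆ N ∧ G.IsNClique n s} :=
    Nat.sSup_mem ⟨0, ∅, by simp, ⟨by simp [SimpleGraph.IsClique], by simp⟩⟩
      ⟨Fintype.card V, fun _ ⟨t, _, ht⟩ => ht.card_eq ▸ t.card_le_univ⟩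
  exact h

/-- If `G` has at least one edge and `L = (e_1, …, e_m)` enumerates all edges of `G`,
then letting `G_L[i]` be the spanning subgraph with edge set `{e_i, …, e_m}` and `N_i`
the common neighbors in `G_L[i]` of the endpoints of `e_i`, we have
`ω(G) = max_i (2 + ω(G[N_i]))`. -/
theorem cliqueNum_eq_sup_of_edge_enum {V : Type*} [Fintype V] [DecidableEq V]
    (G : SimpleGraph V) (hne : G.edgeSet.Nonempty)
    (L : List (Sym2 V)) (hnd : L.Nodup)
    (hmem : ∀ e, e ∈ L ↔ e ∈ G.edgeSet) :
    cliqueNum' G =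
      (Finset.univ : Finset (Fin L.length)).sup fun i =>
        2 + cliqueNumOn G
          {w | ∀ x ∈ L.get i, (G.deleteEdges {e | e ∈ L.take i.1}).Adj x w} := by
  apply le_antisymm
  · -- ω(G) ≤ sup
    obtain ⟨s, hs⟩ := cliqueNum'_attained G
    set n := cliqueNum' G with hn
    have hcard : s.card = n := hs.card_eq
    -- n ≥ 2
    have h2 : 2 ≤ n := by
      obtain ⟨e, he⟩ := hne
      obtain ⟨⟨a, b⟩, rfl⟩ := Quot.exists_rep e
      have hab : G.Adj a b := he
      refine clique_le_cliqueNum' (s := {a, b}) ⟨?_, ?_⟩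
      · rw [Finset.coe_insert, Finset.coe_singleton]
        exact SimpleGraph.isClique_pair.mpr fun _ => hab
      · exact Finset.card_pair hab.ne
    -- pick the minimal index of an edge inside s
    have hT : ∃ j : Fin L.length, ∀ x ∈ L.get j, x ∈ s := by
      obtain ⟨a, ha, b, hb, hab⟩ := Finset.one_lt_card.mp (by omega : 1 < s.card)
      have hadj : G.Adj a b := hs.1 ha hb hab
      obtain ⟨j, hj⟩ := List.mem_iff_get.mp ((hmem s(a, b)).mpr hadj)
      refine ⟨j, ?_⟩
      rw [hj]
      intro x hx
      rcases Sym2.mem_iff.mp hx with rfl | rfl <;> assumption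
    classical
    set T : Finset (Fin L.length) :=
      Finset.univ.filter (fun j => ∀ x ∈ L.get j, x ∈ s) with hTdef
    have hTne : T.Nonempty := by
      obtain ⟨j, hj⟩ := hT
      exact ⟨j, by simpa [hTdef] using hj⟩
    set i := T.min' hTne with hidef
    have hiT : ∀ x ∈ L.get i, x ∈ s :=
      (Finset.mem_filter.mp (T.min'_mem hTne)).2
    have hie : L.get i ∈ G.edgeSet := (hmem _).mp (L.get_mem _)
    obtain ⟨⟨u, v⟩, huv'⟩ := Quot.exists_rep (L.get i)
    have huv : L.get i = s(u, v) := huv'.symm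
    have hadj : G.Adj u v := by rw [← SimpleGraph.mem_edgeSet, ← huv]; exact hie
    have hus : u ∈ s := hiT u (by rw [huv]; exact Sym2.mem_mk_left u v)
    have hvs : v ∈ s := hiT v (by rw [huv]; exact Sym2.mem_mk_right u v)
    -- edges with both endpoints in s are not among the first i edges
    have hmin : ∀ a b : V, a ∈ s → b ∈ s → s(a, b) ∉ {e | e ∈ L.take i.1} := by
      intro a b ha hb hcon
      simp only [Set.mem_setOf_eq] at hcon
      obtain ⟨k, hk, hget⟩ := List.mem_iff_getElem.mp hcon
      have hk' : k < min i.1 L.length := by rwa [List.length_take] at hk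
      have hkL : k < L.length := lt_of_lt_of_le hk' (min_le_right _ _)
      have hki : k < i.1 := lt_of_lt_of_le hk' (min_le_left _ _)
      have hgetL : L[k] = s(a, b) := by
        rw [List.getElem_take] at hget; exact hget
      have hjT : (⟨k, hkL⟩ : Fin L.length) ∈ T := by
        rw [hTdef, Finset.mem_filter]
        refine ⟨Finset.mem_univ _, ?_⟩
        intro x hx
        simp only [List.get_eq_getElem, hgetL] at hx
        rcases Sym2.mem_iff.mp hx with rfl | rfl <;> assumption
      have hle := T.min'_le _ hjT
      rw [← hidef] at hle
      exact absurd hki (not_lt.mpr hle)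
    -- the rest of the clique lies in N_i
    set t := (s.erase u).erase v with htdef
    have hts : ∀ w ∈ t, w ∈ s ∧ w ≠ u ∧ w ≠ v := by
      intro w hw
      simp only [htdef, Finset.mem_erase] at hw
      exact ⟨hw.2.2, hw.2.1, hw.1⟩
    have htN : ↑t ⊆ {w | ∀ x ∈ L.get i, (G.deleteEdges {e | e ∈ L.take i.1}).Adj x w} := by
      intro w hw
      obtain ⟨hws, hwu, hwv⟩ := hts w hw
      intro x hx
      rw [huv] at hx
      rcases Sym2.mem_iff.mp hx with rfl | rfl
      · exact SimpleGraph.deleteEdges_adj.mpr ⟨hs.1 hus hws (Ne.symm hwu), hmin _ _ hus hws⟩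
      · exact SimpleGraph.deleteEdges_adj.mpr ⟨hs.1 hvs hws (Ne.symm hwv), hmin _ _ hvs hws⟩
    have htc : G.IsNClique (n - 2) t := by
      constructor
      · intro a ha b hb hab
        exact hs.1 ((hts a ha).1) ((hts b hb).1) hab
      · have hvu : v ∈ s.erase u := Finset.mem_erase.mpr ⟨hadj.ne.symm, hvs⟩
        rw [htdef, Finset.card_erase_of_mem hvu, Finset.card_erase_of_mem hus, hcard]
        omega
    have hle : n - 2 ≤ cliqueNumOn G
        {w | ∀ x ∈ L.get i, (G.deleteEdges {e | e ∈ L.take i.1}).Adj x w} :=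
      clique_le_cliqueNumOn htN htc
    have hstep : n ≤ 2 + cliqueNumOn G
        {w | ∀ x ∈ L.get i, (G.deleteEdges {e | e ∈ L.take i.1}).Adj x w} := by omega
    exact hstep.trans (Finset.le_sup (f := fun i => 2 + cliqueNumOn G
        {w | ∀ x ∈ L.get i, (G.deleteEdges {e | e ∈ L.take i.1}).Adj x w})
        (Finset.mem_univ i))
  · -- sup ≤ ω(G)
    apply Finset.sup_le
    intro i _
    set N := {w | ∀ x ∈ L.get i, (G.deleteEdges {e | e ∈ L.take i.1}).Adj x w} with hNdef
    obtain ⟨t, htN, htc⟩ := cliqueNumOn_attained G N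
    have hie : L.get i ∈ G.edgeSet := (hmem _).mp (L.get_mem _)
    obtain ⟨⟨u, v⟩, huv'⟩ := Quot.exists_rep (L.get i)
    have huv : L.get i = s(u, v) := huv'.symm
    have hadj : G.Adj u v := by rw [← SimpleGraph.mem_edgeSet, ← huv]; exact hie
    have hadjw : ∀ w ∈ t, G.Adj u w ∧ G.Adj v w := by
      intro w hw
      have hwN : w ∈ N := htN hw
      rw [hNdef, Set.mem_setOf_eq] at hwN
      constructor
      · exact (SimpleGraph.deleteEdges_adj.mp
          (hwN u (by rw [huv]; exact Sym2.mem_mk_left u v))).1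
      · exact (SimpleGraph.deleteEdges_adj.mp
          (hwN v (by rw [huv]; exact Sym2.mem_mk_right u v))).1
    have hut : u ∉ t := fun h => G.loopless.irrefl u (hadjw u h).1
    have hvt : v ∉ t := fun h => G.loopless.irrefl v (hadjw v h).2
    have hclique : G.IsNClique (cliqueNumOn G N + 2) (insert u (insert v t)) := by
      constructor
      · intro a ha b hb hab
        simp only [Finset.coe_insert, Set.mem_insert_iff, Finset.mem_coe] at ha hb
        rcases ha with rfl | rfl | ha <;> rcases hb with rfl | rfl | hb
        · exact absurd rfl hab
        · exact hadj
        · exact (hadjw _ hb).1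
        · exact hadj.symm
        · exact absurd rfl hab
        · exact (hadjw _ hb).2
        · exact (hadjw _ ha).1.symm
        · exact (hadjw _ ha).2.symm
        · exact htc.1 ha hb hab
      · rw [Finset.card_insert_of_notMem (by
            simp only [Finset.mem_insert]
            rintro (rfl | h)
            · exact G.loopless.irrefl u hadj
            · exact hut h),
          Finset.card_insert_of_notMem hvt, htc.card_eq]
    have hfin := clique_le_cliqueNum' hclique
    omega
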